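/- arXiv:2109.00454 — 5 statements merged into one kernel-verified Lean document; each statement's English description precedes it below -/
import Mathlib

section
/- For any index i, the variance of the signal felt by the archetype configuration equals Var[h_i ξ_i] = ((N−1)·M/N²)·(1 + (N−2)·(2p−1)² − (N−1)·(2p−1)⁴). -/
open MeasureTheory ProbabilityTheory


lemma aux_ae_pm {Ω : Type*} [MeasurableSpace Ω] (P : Measure Ω) [IsProbabilityMeasure P]
    (p : ℝ) (hp0 : 0 ≤ p) (hp1 : p ≤ 1) (f : Ω → ℝ) (hm : Measurable f)
    (h1 : P {ω | f ω = 1} = ENNReal.ofReal p)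
    (hm1 : P {ω | f ω = -1} = ENNReal.ofReal (1 - p)) :
    ∀ᵐ ω ∂P, f ω = 1 ∨ f ω = -1 := by
  have hA : MeasurableSet {ω | f ω = 1} := hm (measurableSet_singleton 1)
  have hB : MeasurableSet {ω | f ω = -1} := hm (measurableSet_singleton (-1))
  have hdisj : Disjoint {ω | f ω = 1} {ω | f ω = -1} := by
    rw [Set.disjoint_left]; intro ω h1' h2'
    simp only [Set.mem_setOf_eq] at h1' h2'; rw [h1'] at h2'; norm_num at h2'
  have hU : P ({ω | f ω = 1} ∪ {ω | f ω = -1}) = 1 := by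
    rw [measure_union hdisj hB, h1, hm1, ← ENNReal.ofReal_add hp0 (by linarith)]
    norm_num
  have hcompl : P ({ω | f ω = 1} ∪ {ω | f ω = -1})ᶜ = 0 := by
    rw [measure_compl (hA.union hB) (measure_ne_top _ _), hU, measure_univ, tsub_self]
  filter_upwards [measure_eq_zero_iff_ae_notMem.mp hcompl] with ω hω
  by_contra hc; push_neg at hc; exact hω (by simp [Set.mem_union, Set.mem_setOf_eq, hc.1, hc.2])

lemma aux_integral {Ω : Type*} [MeasurableSpace Ω] (P : Measure Ω) [IsProbabilityMeasure P]
    (p : ℝ) (hp0 : 0 ≤ p) (hp1 : p ≤ 1) (f : Ω → ℝ) (hm : Measurable f)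
    (h1 : P {ω | f ω = 1} = ENNReal.ofReal p)
    (hm1 : P {ω | f ω = -1} = ENNReal.ofReal (1 - p)) :
    ∫ ω, f ω ∂P = 2 * p - 1 := by
  have hA : MeasurableSet {ω | f ω = 1} := hm (measurableSet_singleton 1)
  have hB : MeasurableSet {ω | f ω = -1} := hm (measurableSet_singleton (-1))
  have hae := aux_ae_pm P p hp0 hp1 f hm h1 hm1
  have heq : f =ᵐ[P] fun ω => Set.indicator {ω | f ω = 1} (fun _ => (1:ℝ)) ω
      - Set.indicator {ω | f ω = -1} (fun _ => (1:ℝ)) ω := by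
    filter_upwards [hae] with ω hω
    rcases hω with h | h
    · have h2 : ω ∉ {ω | f ω = -1} := by simp [Set.mem_setOf_eq, h]; norm_num
      simp [Set.indicator_apply, Set.mem_setOf_eq, h, h2]
    · have h2 : ω ∉ {ω | f ω = 1} := by simp [Set.mem_setOf_eq, h]; norm_num
      simp [Set.indicator_apply, Set.mem_setOf_eq, h, h2]
  rw [integral_congr_ae heq, integral_sub (by
      exact (integrable_indicator_iff hA).mpr ((integrableOn_const_iff).mpr (Or.inr (measure_lt_top _ _))))
    (by exact (integrable_indicator_iff hB).mpr ((integrableOn_const_iff).mpr (Or.inr (measure_lt_top _ _)))),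
    integral_indicator_const _ hA, integral_indicator_const _ hB, measureReal_def, measureReal_def, h1, hm1,
    ENNReal.toReal_ofReal hp0, ENNReal.toReal_ofReal (by linarith)]
  simp; ring

lemma aux_int_bdd {Ω : Type*} [MeasurableSpace Ω] (P : Measure Ω) [IsProbabilityMeasure P]
    (f : Ω → ℝ) (hm : Measurable f) (hb : ∀ᵐ ω ∂P, |f ω| ≤ 1) : Integrable f P :=
  (memLp_top_of_bound hm.aestronglyMeasurable 1
    (by filter_upwards [hb] with ω h; rwa [Real.norm_eq_abs])).integrable le_top

lemma aux_memL2 {Ω : Type*} [MeasurableSpace Ω] (P : Measure Ω) [IsProbabilityMeasure P]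
    (f : Ω → ℝ) (hm : Measurable f) (hb : ∀ᵐ ω ∂P, |f ω| ≤ 1) : MemLp f 2 P :=
  (memLp_top_of_bound hm.aestronglyMeasurable 1
    (by filter_upwards [hb] with ω h; rwa [Real.norm_eq_abs])).mono_exponent le_top

lemma aux_sum_ite_card {α : Type*} [DecidableEq α] (t : Finset α) (a : α) (ha : a ∈ t)
    (c d : ℝ) : (∑ x ∈ t, if a = x then c else d) = c + ((t.card : ℝ) - 1) * d := by
  have h : ∀ x, (if a = x then c else d) = d + (if a = x then c - d else 0) := by
    intro x; split <;> ring
  rw [Finset.sum_congr rfl (fun x _ => h x), Finset.sum_add_distrib, Finset.sum_const,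
    Finset.sum_ite_eq, if_pos ha]
  push_cast; ring


/-- For any index `i`, the variance of the signal felt by the archetype
configuration equals
`Var[h_i ξ_i] = ((N-1)*M/N^2) * (1 + (N-2)*(2p-1)^2 - (N-1)*(2p-1)^4)`. -/
theorem archetype_field_variance
    {Ω : Type*} [MeasurableSpace Ω] (P : Measure Ω) [IsProbabilityMeasure P]
    (N M : ℕ) (hN : 2 ≤ N) (hM : 1 ≤ M)
    (p : ℝ) (hp : p ∈ Set.Icc (1 / 2 : ℝ) 1)
    (ξ : Fin N → ℝ) (hξ : ∀ i, ξ i = 1 ∨ ξ i = -1)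
    (χ : Fin N × Fin M → Ω → ℝ)
    (hχmeas : ∀ k, Measurable (χ k))
    (hχ1 : ∀ k, P {ω | χ k ω = 1} = ENNReal.ofReal p)
    (hχm1 : ∀ k, P {ω | χ k ω = -1} = ENNReal.ofReal (1 - p))
    (hindep : iIndepFun χ P)
    (J : Fin N → Fin N → Ω → ℝ)
    (hJ : ∀ i j ω, J i j ω =
      (1 / N) * ∑ a : Fin M, (ξ i * χ (i, a) ω) * (ξ j * χ (j, a) ω))
    (i : Fin N) :
    variance (fun ω => ∑ j ∈ Finset.univ.erase i, J i j ω * (ξ i * ξ j)) P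
      = ((N - 1) * M / N ^ 2) *
        (1 + (N - 2) * (2 * p - 1) ^ 2 - (N - 1) * (2 * p - 1) ^ 4) := by
  obtain ⟨hp12, hp1⟩ := hp
  have hp0 : (0:ℝ) ≤ p := by linarith
  set r : ℝ := 2 * p - 1 with hr
  have hae : ∀ k, ∀ᵐ ω ∂P, χ k ω = 1 ∨ χ k ω = -1 :=
    fun k => aux_ae_pm P p hp0 hp1 (χ k) (hχmeas k) (hχ1 k) (hχm1 k)
  have habs : ∀ k, ∀ᵐ ω ∂P, |χ k ω| ≤ 1 := by
    intro k; filter_upwards [hae k] with ω h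
    rcases h with h | h <;> rw [h] <;> norm_num
  have hint : ∀ k, ∫ ω, χ k ω ∂P = r :=
    fun k => aux_integral P p hp0 hp1 (χ k) (hχmeas k) (hχ1 k) (hχm1 k)
  have hpair : ∀ k l, k ≠ l → ∫ ω, χ k ω * χ l ω ∂P = r * r := by
    intro k l hkl
    have h := (hindep.indepFun hkl).integral_mul_eq_mul_integral (hχmeas k).aestronglyMeasurable
      (hχmeas l).aestronglyMeasurable
    simpa [Pi.mul_apply, hint k, hint l] using h
  set s : Finset (Fin N) := Finset.univ.erase i with hs
  set Q : Finset (Fin N × Fin M) := s ×ˢ Finset.univ with hQ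
  set F : Fin N × Fin M → Ω → ℝ := fun q ω => χ (i, q.2) ω * χ q ω with hF
  have hFmeas : ∀ q, Measurable (F q) := fun q => (hχmeas _).mul (hχmeas _)
  have hFabs : ∀ q, ∀ᵐ ω ∂P, |F q ω| ≤ 1 := by
    intro q; filter_upwards [habs (i, q.2), habs q] with ω h1 h2
    rw [hF]; simp only []
    rw [abs_mul]
    exact mul_le_one₀ h1 (abs_nonneg _) h2
  have hFint : ∀ q, Integrable (F q) P := fun q => aux_int_bdd P _ (hFmeas q) (hFabs q)
  -- rewrite the random variable
  have hXeq : (fun ω => ∑ j ∈ Finset.univ.erase i, J i j ω * (ξ i * ξ j))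
      = fun ω => (1 / (N:ℝ)) * ∑ q ∈ Q, F q ω := by
    funext ω
    have hsq : ∀ j, ξ j * ξ j = 1 := by
      intro j; rcases hξ j with h | h <;> rw [h] <;> norm_num
    rw [hQ, Finset.sum_product, Finset.mul_sum]
    apply Finset.sum_congr rfl
    intro j hj
    rw [hJ]
    have h1 : ∀ a : Fin M, (ξ i * χ (i, a) ω) * (ξ j * χ (j, a) ω)
        = (ξ i * ξ j) * (χ (i, a) ω * χ (j, a) ω) := fun a => by ring
    rw [Finset.sum_congr rfl (fun a _ => h1 a), ← Finset.mul_sum]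
    have h2 := hsq i; have h3 := hsq j
    have h4 : ∑ a : Fin M, F (j, a) ω = ∑ a : Fin M, χ (i, a) ω * χ (j, a) ω := rfl
    rw [h4]
    calc (1 / (N:ℝ) * ((ξ i * ξ j) * ∑ a : Fin M, χ (i, a) ω * χ (j, a) ω)) * (ξ i * ξ j)
        = (ξ i * ξ i) * ((ξ j * ξ j) * ((1 / (N:ℝ)) * ∑ a : Fin M, χ (i, a) ω * χ (j, a) ω)) := by
          ring
      _ = (1 / (N:ℝ)) * ∑ a : Fin M, χ (i, a) ω * χ (j, a) ω := by rw [h2, h3]; ring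
  rw [hXeq]
  -- L² membership
  have hX2 : MemLp (fun ω => (1 / (N:ℝ)) * ∑ q ∈ Q, F q ω) 2 P := by
    simpa [Finset.sum_apply] using
      ((memLp_finset_sum' Q (fun q _ => aux_memL2 P (F q) (hFmeas q) (hFabs q))).const_mul
        (1 / (N:ℝ)))
  rw [variance_eq_sub hX2]
  -- cardinalities
  have hcardQ : Q.card = s.card * M := by
    rw [hQ, Finset.card_product, Finset.card_univ, Fintype.card_fin]
  have hcards : s.card = N - 1 := by
    rw [hs, Finset.card_erase_of_mem (Finset.mem_univ i), Finset.card_univ, Fintype.card_fin]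
  have hcs : ((s.card : ℕ) : ℝ) = (N:ℝ) - 1 := by
    rw [hcards, Nat.cast_sub (by omega)]; norm_num
  have hmemQ : ∀ q : Fin N × Fin M, q ∈ Q → q.1 ≠ i := by
    intro q hq
    rw [hQ, Finset.mem_product] at hq
    exact Finset.ne_of_mem_erase hq.1
  have hFval : ∀ q ∈ Q, ∫ ω, F q ω ∂P = r * r := by
    intro q hq
    exact hpair (i, q.2) q (fun h => hmemQ q hq (by rw [← h]))
  have hE1 : ∫ ω, (1 / (N:ℝ)) * ∑ q ∈ Q, F q ω ∂P = (1 / (N:ℝ)) * (((N:ℝ) - 1) * M * (r * r)) := by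
    rw [integral_const_mul, integral_finset_sum Q (fun q _ => hFint q),
      Finset.sum_congr rfl hFval, Finset.sum_const, nsmul_eq_mul, hcardQ]
    push_cast [hcs]
    ring
  -- second moment
  have hprodint : ∀ q q' : Fin N × Fin M, Integrable (fun ω => F q ω * F q' ω) P := by
    intro q q'
    apply aux_int_bdd P _ ((hFmeas q).mul (hFmeas q'))
    filter_upwards [hFabs q, hFabs q'] with ω h1 h2
    rw [Pi.mul_apply, abs_mul]; exact mul_le_one₀ h1 (abs_nonneg _) h2
  have hG : ∀ j ∈ s, ∀ k ∈ s, ∀ a b : Fin M, ∫ ω, F (j, a) ω * F (k, b) ω ∂P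
      = if a = b then (if j = k then (1:ℝ) else r ^ 2) else r ^ 4 := by
    intro j hj k hk a b
    have hji : j ≠ i := Finset.ne_of_mem_erase hj
    have hki : k ≠ i := Finset.ne_of_mem_erase hk
    by_cases hab : a = b
    · subst hab
      rw [if_pos rfl]
      by_cases hjk : j = k
      · subst hjk
        rw [if_pos rfl]
        have heq : (fun ω => F (j, a) ω * F (j, a) ω) =ᵐ[P] fun _ => (1:ℝ) := by
          filter_upwards [hae (i, a), hae (j, a)] with ω h1 h2
          rw [hF]; simp only []
          rcases h1 with h1 | h1 <;> rcases h2 with h2 | h2 <;> rw [h1, h2] <;> norm_num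
        rw [integral_congr_ae heq, integral_const]; simp
      · rw [if_neg hjk]
        have heq : (fun ω => F (j, a) ω * F (k, a) ω)
            =ᵐ[P] fun ω => χ (j, a) ω * χ (k, a) ω := by
          filter_upwards [hae (i, a)] with ω h1
          rw [hF]; simp only []
          rcases h1 with h1 | h1 <;> rw [h1] <;> ring
        rw [integral_congr_ae heq, hpair (j, a) (k, a) (by simp [hjk])]
        ring
    · rw [if_neg hab]
      have hind : IndepFun (χ (i, a) * χ (j, a)) (χ (i, b) * χ (k, b)) P := by
        apply hindep.indepFun_mul_mul hχmeas (i, a) (j, a) (i, b) (k, b)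
        · simp [Prod.ext_iff, hab]
        · simp [Prod.ext_iff, hab]
        · simp [Prod.ext_iff, hab]
        · simp [Prod.ext_iff, hab]
      have h := hind.integral_mul_eq_mul_integral ((hχmeas _).mul (hχmeas _)).aestronglyMeasurable
        ((hχmeas _).mul (hχmeas _)).aestronglyMeasurable
      have h2 : ∫ ω, F (j, a) ω * F (k, b) ω ∂P
          = (∫ ω, χ (i, a) ω * χ (j, a) ω ∂P) * ∫ ω, χ (i, b) ω * χ (k, b) ω ∂P := h
      rw [h2, hpair _ _ (by simp [Prod.ext_iff, Ne.symm hji]),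
        hpair _ _ (by simp [Prod.ext_iff, Ne.symm hki])]
      ring
  have hE2 : ∫ ω, ((fun ω => (1 / (N:ℝ)) * ∑ q ∈ Q, F q ω) ^ 2) ω ∂P
      = (1 / (N:ℝ))^2 * ((((N:ℝ) - 1) * M) *
          (1 + ((N:ℝ) - 2) * r ^ 2 + (((N:ℝ) - 1) * ((M:ℝ) - 1)) * r ^ 4)) := by
    have hfun : ∀ ω, ((fun ω => (1 / (N:ℝ)) * ∑ q ∈ Q, F q ω) ^ 2) ω
        = (1 / (N:ℝ))^2 * ∑ q ∈ Q, ∑ q' ∈ Q, F q ω * F q' ω := by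
      intro ω
      show ((1 / (N:ℝ)) * ∑ q ∈ Q, F q ω) ^ 2
        = (1 / (N:ℝ))^2 * ∑ q ∈ Q, ∑ q' ∈ Q, F q ω * F q' ω
      rw [← Finset.sum_mul_sum Q Q (fun q => F q ω) (fun q => F q ω)]
      ring
    rw [integral_congr_ae (Filter.Eventually.of_forall hfun), integral_const_mul,
      integral_finset_sum Q (fun q _ => integrable_finset_sum Q (fun q' _ => hprodint q q')),
      Finset.sum_congr rfl
        (fun q _ => integral_finset_sum Q (fun q' _ => hprodint q q'))]
    have hval : ∑ q ∈ Q, ∑ q' ∈ Q, ∫ ω, F q ω * F q' ω ∂P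
        = ((N:ℝ) - 1) * M *
          (1 + ((N:ℝ) - 2) * r ^ 2 + ((N:ℝ) - 1) * (((M:ℝ) - 1) * r ^ 4)) := by
      rw [hQ]
      simp only [Finset.sum_product]
      have hb : ∀ j ∈ s, ∀ k ∈ s, ∀ a : Fin M,
          (∑ b : Fin M, ∫ ω, F (j, a) ω * F (k, b) ω ∂P)
          = (if j = k then (1:ℝ) else r ^ 2) + ((M:ℝ) - 1) * r ^ 4 := by
        intro j hj k hk a
        rw [Finset.sum_congr rfl (fun b _ => hG j hj k hk a b),
          aux_sum_ite_card Finset.univ a (Finset.mem_univ a), Finset.card_univ,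
          Fintype.card_fin]
      have hk' : ∀ j ∈ s, ∀ a : Fin M,
          (∑ k ∈ s, ∑ b : Fin M, ∫ ω, F (j, a) ω * F (k, b) ω ∂P)
          = (1 + ((N:ℝ) - 2) * r ^ 2) + ((N:ℝ) - 1) * (((M:ℝ) - 1) * r ^ 4) := by
        intro j hj a
        rw [Finset.sum_congr rfl (fun k hk => hb j hj k hk a), Finset.sum_add_distrib,
          aux_sum_ite_card s j hj, Finset.sum_const, nsmul_eq_mul, hcs]
        ring
      have ha' : ∀ j ∈ s,
          (∑ a : Fin M, ∑ k ∈ s, ∑ b : Fin M, ∫ ω, F (j, a) ω * F (k, b) ω ∂P)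
          = (M:ℝ) * ((1 + ((N:ℝ) - 2) * r ^ 2) + ((N:ℝ) - 1) * (((M:ℝ) - 1) * r ^ 4)) := by
        intro j hj
        rw [Finset.sum_congr rfl (fun a _ => hk' j hj a), Finset.sum_const,
          Finset.card_univ, Fintype.card_fin, nsmul_eq_mul]
      rw [Finset.sum_congr rfl ha', Finset.sum_const, nsmul_eq_mul, hcs]
      ring
    rw [hval]
    ring
  rw [hE2]
  have hE1' : ∫ ω, (fun ω => (1 / (N:ℝ)) * ∑ q ∈ Q, F q ω) ω ∂P
      = (1 / (N:ℝ)) * (((N:ℝ) - 1) * M * (r * r)) := hE1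
  rw [hE1']
  have hNne : ((N:ℝ)) ≠ 0 := Nat.cast_ne_zero.mpr (by omega)
  field_simp
  ring
end

section
/- For any example label c ∈ {1,…,M}, the expected energy of the example configuration η^c under the Hebbian Hamiltonian equals E[H(η^c)] = −(N−1)·(1 + (M−1)·(2p−1)⁴). -/
open MeasureTheory ProbabilityTheory

/-- For any example label `c`, the expected energy of the example
configuration `η^c` under the Hebbian Hamiltonian equals
`E[H(η^c)] = -(N-1)*(1 + (M-1)*(2p-1)^4)`. -/
theorem example_energy_expectation
    {Ω : Type*} [MeasurableSpace Ω] (P : Measure Ω) [IsProbabilityMeasure P]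
    (N M : ℕ) (hN : 2 ≤ N) (hM : 1 ≤ M)
    (p : ℝ) (hp : p ∈ Set.Icc (1 / 2 : ℝ) 1)
    (ξ : Fin N → ℝ) (hξ : ∀ i, ξ i = 1 ∨ ξ i = -1)
    (χ : Fin N × Fin M → Ω → ℝ)
    (hχmeas : ∀ k, Measurable (χ k))
    (hχ1 : ∀ k, P {ω | χ k ω = 1} = ENNReal.ofReal p)
    (hχm1 : ∀ k, P {ω | χ k ω = -1} = ENNReal.ofReal (1 - p))
    (hindep : iIndepFun χ P)
    (H : (Fin N → ℝ) → Ω → ℝ)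
    (hH : ∀ σ ω, H σ ω =
      -(1 / N) * ∑ i : Fin N, ∑ j ∈ Finset.univ.erase i, ∑ a : Fin M,
        (ξ i * χ (i, a) ω) * (ξ j * χ (j, a) ω) * (σ i * σ j))
    (c : Fin M) :
    ∫ ω, H (fun i => ξ i * χ (i, c) ω) ω ∂P
      = -(N - 1) * (1 + (M - 1) * (2 * p - 1) ^ 4) := by
  obtain ⟨hp0, hp1⟩ := hp
  have hp0' : (0:ℝ) ≤ p := le_trans (by norm_num) hp0
  have hp1m : (0:ℝ) ≤ 1 - p := by linarith
  set r : ℝ := 2 * p - 1 with hr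
  -- a.e. each χ k takes values ±1
  have hA : ∀ k, MeasurableSet {ω | χ k ω = 1} :=
    fun k => hχmeas k (measurableSet_singleton 1)
  have hB : ∀ k, MeasurableSet {ω | χ k ω = -1} :=
    fun k => hχmeas k (measurableSet_singleton (-1))
  have hdisj : ∀ k, Disjoint {ω | χ k ω = 1} {ω | χ k ω = (-1:ℝ)} := by
    intro k
    refine Set.disjoint_left.mpr fun ω h1 h2 => ?_
    simp only [Set.mem_setOf_eq] at h1 h2
    rw [h1] at h2; norm_num at h2
  have hae : ∀ k, ∀ᵐ ω ∂P, χ k ω = 1 ∨ χ k ω = -1 := by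
    intro k
    have hU : P ({ω | χ k ω = 1} ∪ {ω | χ k ω = -1}) = 1 := by
      rw [measure_union (hdisj k) (hB k), hχ1, hχm1,
        ← ENNReal.ofReal_add hp0' hp1m]
      norm_num
    have hcompl : P ({ω | χ k ω = 1} ∪ {ω | χ k ω = -1})ᶜ = 0 := by
      rw [measure_compl ((hA k).union (hB k)) (measure_ne_top _ _), hU, measure_univ,
        tsub_self]
    refine ae_iff.mpr ?_
    have hset : {ω | ¬(χ k ω = 1 ∨ χ k ω = -1)} = ({ω | χ k ω = 1} ∪ {ω | χ k ω = -1})ᶜ := by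
      ext ω; simp [not_or]
    rw [hset]; exact hcompl
  -- a.e. bound
  have hb : ∀ k, ∀ᵐ ω ∂P, |χ k ω| ≤ 1 := by
    intro k
    filter_upwards [hae k] with ω hω
    rcases hω with h | h <;> rw [h] <;> norm_num
  -- integrability of χ and products
  have hint1 : ∀ k, Integrable (χ k) P := by
    intro k
    refine Integrable.mono' (integrable_const 1) (hχmeas k).aestronglyMeasurable ?_
    filter_upwards [hb k] with ω hω using hω
  have hint2 : ∀ k l, Integrable (χ k * χ l) P := by
    intro k l
    refine Integrable.mono' (integrable_const 1)
      ((hχmeas k).mul (hχmeas l)).aestronglyMeasurable ?_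
    filter_upwards [hb k, hb l] with ω h1 h2
    calc |(χ k * χ l) ω| = |χ k ω| * |χ l ω| := abs_mul _ _
      _ ≤ 1 * 1 := mul_le_mul h1 h2 (abs_nonneg _) zero_le_one
      _ = 1 := by norm_num
  have hint4 : ∀ k l m n, Integrable (fun ω => χ k ω * χ l ω * (χ m ω * χ n ω)) P := by
    intro k l m n
    refine Integrable.mono' (integrable_const 1)
      ((((hχmeas k).mul (hχmeas l)).mul ((hχmeas m).mul (hχmeas n))).aestronglyMeasurable) ?_
    filter_upwards [hb k, hb l, hb m, hb n] with ω h1 h2 h3 h4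
    have : |χ k ω * χ l ω * (χ m ω * χ n ω)| = |χ k ω| * |χ l ω| * (|χ m ω| * |χ n ω|) := by
      rw [abs_mul, abs_mul, abs_mul]
    rw [Real.norm_eq_abs, this]
    calc |χ k ω| * |χ l ω| * (|χ m ω| * |χ n ω|) ≤ 1 * 1 * (1 * 1) := by
          apply mul_le_mul (mul_le_mul h1 h2 (abs_nonneg _) zero_le_one)
            (mul_le_mul h3 h4 (abs_nonneg _) zero_le_one)
            (mul_nonneg (abs_nonneg _) (abs_nonneg _)) (by norm_num)
      _ = 1 := by norm_num
  -- expectation of a single χ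
  have hE : ∀ k, ∫ ω, χ k ω ∂P = r := by
    intro k
    have heq : χ k =ᵐ[P]
        fun ω => Set.indicator {ω | χ k ω = 1} (fun _ => (1:ℝ)) ω
          + Set.indicator {ω | χ k ω = -1} (fun _ => (-1:ℝ)) ω := by
      filter_upwards [hae k] with ω hω
      rcases hω with h | h <;>
        simp only [Set.indicator_apply, Set.mem_setOf_eq, h] <;> norm_num
    rw [integral_congr_ae heq, integral_add
      ((integrable_const (1:ℝ)).indicator (hA k))
      ((integrable_const (-1:ℝ)).indicator (hB k)),
      integral_indicator_const _ (hA k), integral_indicator_const _ (hB k),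
      measureReal_def, measureReal_def, hχ1 k, hχm1 k, ENNReal.toReal_ofReal hp0', ENNReal.toReal_ofReal hp1m]
    simp [hr]; ring
  -- expectation of a pair
  have hE2 : ∀ k l, k ≠ l → ∫ ω, χ k ω * χ l ω ∂P = r ^ 2 := by
    intro k l hkl
    have h := (hindep.indepFun hkl).integral_mul_eq_mul_integral (hint1 k).aestronglyMeasurable (hint1 l).aestronglyMeasurable
    have e : (fun ω => χ k ω * χ l ω) = χ k * χ l := rfl
    rw [e, h, hE, hE]; ring
  -- expectation of a 4-fold product with distinct indices
  have hE4 : ∀ (i j : Fin N) (a : Fin M), i ≠ j → a ≠ c →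
      ∫ ω, χ (i,a) ω * χ (j,a) ω * (χ (i,c) ω * χ (j,c) ω) ∂P = r ^ 4 := by
    intro i j a hij hac
    have h1 : IndepFun (χ (i,a) * χ (j,a)) (χ (i,c) * χ (j,c)) P :=
      hindep.indepFun_mul_mul hχmeas (i,a) (j,a) (i,c) (j,c)
        (fun h => hac (congrArg Prod.snd h)) (fun h => hij (congrArg Prod.fst h))
        (fun h => hac (congrArg Prod.snd h)) (fun h => hac (congrArg Prod.snd h))
    have h := h1.integral_mul_eq_mul_integral (hint2 _ _).aestronglyMeasurable (hint2 _ _).aestronglyMeasurable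
    have e : (fun ω => χ (i,a) ω * χ (j,a) ω * (χ (i,c) ω * χ (j,c) ω))
        = χ (i,a) * χ (j,a) * (χ (i,c) * χ (j,c)) := rfl
    have e2 : integral P (χ (i,a) * χ (j,a)) = r ^ 2 :=
      hE2 (i,a) (j,a) (fun h => hij (congrArg Prod.fst h))
    have e3 : integral P (χ (i,c) * χ (j,c)) = r ^ 2 :=
      hE2 (i,c) (j,c) (fun h => hij (congrArg Prod.fst h))
    rw [e, h, e2, e3]; ring
  -- expectation when a = c
  have hEc : ∀ (i j : Fin N), i ≠ j →
      ∫ ω, χ (i,c) ω * χ (j,c) ω * (χ (i,c) ω * χ (j,c) ω) ∂P = 1 := by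
    intro i j hij
    have heq : (fun ω => χ (i,c) ω * χ (j,c) ω * (χ (i,c) ω * χ (j,c) ω)) =ᵐ[P]
        fun _ => (1:ℝ) := by
      filter_upwards [hae (i,c), hae (j,c)] with ω h1 h2
      have e1 : χ (i,c) ω * χ (i,c) ω = 1 := by rcases h1 with h | h <;> rw [h] <;> norm_num
      have e2 : χ (j,c) ω * χ (j,c) ω = 1 := by rcases h2 with h | h <;> rw [h] <;> norm_num
      calc χ (i,c) ω * χ (j,c) ω * (χ (i,c) ω * χ (j,c) ω)
          = (χ (i,c) ω * χ (i,c) ω) * (χ (j,c) ω * χ (j,c) ω) := by ring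
        _ = 1 := by rw [e1, e2]; norm_num
    rw [integral_congr_ae heq]
    simp
  -- simplify the Hamiltonian at the example configuration
  have hξ2 : ∀ i, ξ i * ξ i = 1 := by
    intro i; rcases hξ i with h | h <;> rw [h] <;> norm_num
  have hHeq : ∀ ω, H (fun i => ξ i * χ (i,c) ω) ω =
      -(1 / N) * ∑ i : Fin N, ∑ j ∈ Finset.univ.erase i, ∑ a : Fin M,
        χ (i,a) ω * χ (j,a) ω * (χ (i,c) ω * χ (j,c) ω) := by
    intro ω
    rw [hH]
    congr 1
    refine Finset.sum_congr rfl fun i _ => Finset.sum_congr rfl fun j _ =>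
      Finset.sum_congr rfl fun a _ => ?_
    rcases hξ i with hi | hi <;> rcases hξ j with hj | hj <;> simp only [hi, hj] <;> ring
  -- compute the integral
  have key : ∫ ω, H (fun i => ξ i * χ (i,c) ω) ω ∂P =
      -(1 / N) * ∑ i : Fin N, ∑ j ∈ Finset.univ.erase i, ∑ a : Fin M,
        ∫ ω, χ (i,a) ω * χ (j,a) ω * (χ (i,c) ω * χ (j,c) ω) ∂P := by
    simp only [hHeq]
    rw [integral_const_mul, integral_finset_sum _ (fun i _ =>
      integrable_finset_sum _ (fun j _ => integrable_finset_sum _ (fun a _ => hint4 _ _ _ _)))]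
    congr 1
    refine Finset.sum_congr rfl fun i _ => ?_
    rw [integral_finset_sum _ (fun j _ => integrable_finset_sum _ (fun a _ => hint4 _ _ _ _))]
    exact Finset.sum_congr rfl fun j _ =>
      integral_finset_sum _ (fun a _ => hint4 _ _ _ _)
  rw [key]
  -- evaluate the sums
  have hinner : ∀ (i : Fin N), ∀ j ∈ Finset.univ.erase i,
      ∑ a : Fin M, ∫ ω, χ (i,a) ω * χ (j,a) ω * (χ (i,c) ω * χ (j,c) ω) ∂P
        = 1 + (M - 1) * r ^ 4 := by
    intro i j hj
    have hij : i ≠ j := (Finset.ne_of_mem_erase hj).symm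
    rw [← Finset.add_sum_erase _ _ (Finset.mem_univ c), hEc i j hij]
    congr 1
    rw [Finset.sum_congr rfl fun a ha =>
      hE4 i j a hij (Finset.ne_of_mem_erase ha), Finset.sum_const,
      Finset.card_erase_of_mem (Finset.mem_univ c), Finset.card_univ, Fintype.card_fin,
      nsmul_eq_mul]
    congr 1
    exact Nat.cast_pred hM
  have hsum : ∑ i : Fin N, ∑ j ∈ Finset.univ.erase i, ∑ a : Fin M,
      ∫ ω, χ (i,a) ω * χ (j,a) ω * (χ (i,c) ω * χ (j,c) ω) ∂P
        = N * ((N - 1) * (1 + (M - 1) * r ^ 4)) := by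
    rw [Finset.sum_congr rfl fun i _ => Finset.sum_congr rfl (hinner i)]
    simp only [Finset.sum_const, Finset.card_erase_of_mem (Finset.mem_univ _),
      Finset.card_univ, Fintype.card_fin, nsmul_eq_mul,
      Nat.cast_pred (by omega : 0 < N)]
  rw [hsum]
  have hN0 : (N : ℝ) ≠ 0 := Nat.cast_ne_zero.mpr (by omega)
  field_simp
end

section
/- The expected energy gap between the archetype configuration and any example configuration η^c equals E[H(ξ)] − E[H(η^c)] = (N−1)·(1 + (M−1)·r⁴ − M·r²) with r = 2p−1; moreover, when 0 < r < 1, this gap is negative (i.e. the archetype is energetically favored over the examples) if and only if M > (1+r²)/r². -/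
open MeasureTheory ProbabilityTheory

/-- The expected energy gap between the archetype configuration and any
example configuration `η^c` equals
`E[H(ξ)] - E[H(η^c)] = (N-1)*(1 + (M-1)*r^4 - M*r^2)` with `r = 2p - 1`; moreover, when
`0 < r < 1`, this gap is negative (the archetype is energetically favored over the
examples) if and only if `M > (1 + r^2)/r^2`. -/
theorem energy_gap_archetype_vs_example
    {Ω : Type*} [MeasurableSpace Ω] (P : Measure Ω) [IsProbabilityMeasure P]
    (N M : ℕ) (hN : 2 ≤ N) (hM : 1 ≤ M)
    (p : ℝ) (hp : p ∈ Set.Ioo (1 / 2 : ℝ) 1)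
    (r : ℝ) (hr : r = 2 * p - 1)
    (ξ : Fin N → ℝ) (hξ : ∀ i, ξ i = 1 ∨ ξ i = -1)
    (χ : Fin N × Fin M → Ω → ℝ)
    (hχmeas : ∀ k, Measurable (χ k))
    (hχ1 : ∀ k, P {ω | χ k ω = 1} = ENNReal.ofReal p)
    (hχm1 : ∀ k, P {ω | χ k ω = -1} = ENNReal.ofReal (1 - p))
    (hindep : iIndepFun χ P)
    (H : (Fin N → ℝ) → Ω → ℝ)
    (hH : ∀ σ ω, H σ ω =
      -(1 / N) * ∑ i : Fin N, ∑ j ∈ Finset.univ.erase i, ∑ a : Fin M,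
        (ξ i * χ (i, a) ω) * (ξ j * χ (j, a) ω) * (σ i * σ j))
    (c : Fin M) :
    ((∫ ω, H ξ ω ∂P) - ∫ ω, H (fun i => ξ i * χ (i, c) ω) ω ∂P
        = (N - 1) * (1 + (M - 1) * r ^ 4 - M * r ^ 2))
    ∧ ((∫ ω, H ξ ω ∂P) - (∫ ω, H (fun i => ξ i * χ (i, c) ω) ω ∂P) < 0
        ↔ (1 + r ^ 2) / r ^ 2 < M) := by
  have hp0 : (0:ℝ) < p := lt_trans (by norm_num) hp.1
  have hp1 : p < 1 := hp.2
  have hr0 : 0 < r := by rw [hr]; linarith [hp.1]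
  have hr1 : r < 1 := by rw [hr]; linarith
  -- measurability of the level sets
  have hmeasA : ∀ k, MeasurableSet {ω | χ k ω = 1} := fun k =>
    (hχmeas k) (measurableSet_singleton 1)
  have hmeasB : ∀ k, MeasurableSet {ω | χ k ω = -1} := fun k =>
    (hχmeas k) (measurableSet_singleton (-1))
  -- a.e. each χ k takes values in {1, -1}
  have hae : ∀ k, ∀ᵐ ω ∂P, χ k ω = 1 ∨ χ k ω = -1 := by
    intro k
    have hdisj : Disjoint {ω | χ k ω = 1} {ω | χ k ω = -1} := by
      rw [Set.disjoint_left]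
      intro ω h1 h2
      simp only [Set.mem_setOf_eq] at h1 h2
      rw [h1] at h2; norm_num at h2
    have hunion : P ({ω | χ k ω = 1} ∪ {ω | χ k ω = -1}) = 1 := by
      rw [measure_union hdisj (hmeasB k), hχ1, hχm1,
        ← ENNReal.ofReal_add (by linarith) (by linarith)]
      norm_num
    have hcompl : P ({ω | χ k ω = 1} ∪ {ω | χ k ω = -1})ᶜ = 0 := by
      rw [measure_compl ((hmeasA k).union (hmeasB k)) (measure_ne_top _ _), hunion]
      simp
    have hset : {ω | ¬(χ k ω = 1 ∨ χ k ω = -1)}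
        = ({ω | χ k ω = 1} ∪ {ω | χ k ω = -1})ᶜ := by
      ext ω; simp [not_or]
    rw [MeasureTheory.ae_iff, hset]
    exact hcompl
  -- a.e. χ k squared is 1
  have hsq : ∀ k, (fun ω => χ k ω * χ k ω) =ᵐ[P] fun _ => (1:ℝ) := by
    intro k
    filter_upwards [hae k] with ω h
    rcases h with h | h <;> rw [h] <;> norm_num
  have hbd : ∀ k, ∀ᵐ ω ∂P, ‖χ k ω‖ ≤ 1 := by
    intro k
    filter_upwards [hae k] with ω h
    rcases h with h | h <;> rw [h] <;> norm_num
  have hint : ∀ k, Integrable (χ k) P := fun k =>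
    (integrable_const (1:ℝ)).mono' (hχmeas k).aestronglyMeasurable (hbd k)
  have hint2 : ∀ k k', Integrable (fun ω => χ k ω * χ k' ω) P := by
    intro k k'
    refine (integrable_const (1:ℝ)).mono'
      ((hχmeas k).mul (hχmeas k')).aestronglyMeasurable ?_
    filter_upwards [hbd k, hbd k'] with ω h1 h2
    rw [norm_mul]
    nlinarith [norm_nonneg (χ k ω), norm_nonneg (χ k' ω)]
  have hint4 : ∀ k1 k2 k3 k4, Integrable
      (fun ω => (χ k1 ω * χ k2 ω) * (χ k3 ω * χ k4 ω)) P := by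
    intro k1 k2 k3 k4
    refine (integrable_const (1:ℝ)).mono'
      (((hχmeas k1).mul (hχmeas k2)).mul ((hχmeas k3).mul (hχmeas k4))).aestronglyMeasurable ?_
    filter_upwards [hbd k1, hbd k2, hbd k3, hbd k4] with ω h1 h2 h3 h4
    rw [norm_mul, norm_mul, norm_mul]
    have ha : ‖χ k1 ω‖ * ‖χ k2 ω‖ ≤ 1 := mul_le_one₀ h1 (norm_nonneg _) h2
    have hb : ‖χ k3 ω‖ * ‖χ k4 ω‖ ≤ 1 := mul_le_one₀ h3 (norm_nonneg _) h4
    exact mul_le_one₀ ha (by positivity) hb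
  -- expectation of a single χ
  have hE1 : ∀ k, ∫ ω, χ k ω ∂P = r := by
    intro k
    have heq : χ k =ᵐ[P]
        fun ω => Set.indicator {ω | χ k ω = 1} (fun _ => (2:ℝ)) ω - 1 := by
      filter_upwards [hae k] with ω h
      rcases h with h | h
      · rw [Set.indicator_of_mem (show ω ∈ {ω | χ k ω = 1} from h), h]; norm_num
      · rw [Set.indicator_of_notMem (show ω ∉ {ω | χ k ω = 1} by
          intro hm
          simp only [Set.mem_setOf_eq] at hm
          rw [h] at hm; norm_num at hm), h]
        norm_num
    rw [integral_congr_ae heq,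
      integral_sub ((integrable_const (2:ℝ)).indicator (hmeasA k)) (integrable_const 1),
      integral_indicator_const _ (hmeasA k), integral_const]
    simp only [measureReal_def, hχ1 k, ENNReal.toReal_ofReal hp0.le, measure_univ, ENNReal.toReal_one,
      smul_eq_mul, one_mul, hr]
    ring
  -- expectation of a product of two distinct χ's
  have hE2 : ∀ k k', k ≠ k' → ∫ ω, χ k ω * χ k' ω ∂P = r ^ 2 := by
    intro k k' hkk'
    have h := (hindep.indepFun hkk').integral_mul_eq_mul_integral (hint k).aestronglyMeasurable (hint k').aestronglyMeasurable
    have h' : ∫ ω, χ k ω * χ k' ω ∂P = (∫ ω, χ k ω ∂P) * ∫ ω, χ k' ω ∂P := h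
    rw [h', hE1, hE1]; ring
  -- expectation of a product of four distinct χ's
  have hE4 : ∀ k1 k2 k3 k4 : Fin N × Fin M, k1 ≠ k2 → k3 ≠ k4 → k1 ≠ k3 → k1 ≠ k4 →
      k2 ≠ k3 → k2 ≠ k4 →
      ∫ ω, (χ k1 ω * χ k2 ω) * (χ k3 ω * χ k4 ω) ∂P = r ^ 4 := by
    intro k1 k2 k3 k4 h12 h34 h13 h14 h23 h24
    have hI : IndepFun (χ k1 * χ k2) (χ k3 * χ k4) P :=
      hindep.indepFun_mul_mul hχmeas k1 k2 k3 k4 h13 h14 h23 h24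
    have h := hI.integral_mul_eq_mul_integral (hint2 k1 k2).aestronglyMeasurable (hint2 k3 k4).aestronglyMeasurable
    have h' : ∫ ω, (χ k1 ω * χ k2 ω) * (χ k3 ω * χ k4 ω) ∂P
        = (∫ ω, χ k1 ω * χ k2 ω ∂P) * ∫ ω, χ k3 ω * χ k4 ω ∂P := h
    rw [h', hE2 _ _ h12, hE2 _ _ h34]; ring
  have hξsq : ∀ i, ξ i * ξ i = 1 := by
    intro i; rcases hξ i with h | h <;> rw [h] <;> norm_num
  have hN0 : (N:ℝ) ≠ 0 := by positivity
  -- generic swap of integral and triple sum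
  have key : ∀ (f : Fin N → Fin N → Fin M → Ω → ℝ), (∀ i j a, Integrable (f i j a) P) →
      ∫ ω, -(1/(N:ℝ)) * ∑ i : Fin N, ∑ j ∈ Finset.univ.erase i, ∑ a : Fin M, f i j a ω ∂P
        = -(1/(N:ℝ)) * ∑ i : Fin N, ∑ j ∈ Finset.univ.erase i, ∑ a : Fin M,
            ∫ ω, f i j a ω ∂P := by
    intro f hf
    rw [integral_const_mul]
    congr 1
    rw [integral_finset_sum _ fun i _ => integrable_finset_sum _ fun j _ =>
      integrable_finset_sum _ fun a _ => hf i j a]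
    refine Finset.sum_congr rfl fun i _ => ?_
    rw [integral_finset_sum _ fun j _ => integrable_finset_sum _ fun a _ => hf i j a]
    refine Finset.sum_congr rfl fun j _ => ?_
    exact integral_finset_sum _ fun a _ => hf i j a
  -- E[H ξ]
  have hHξ : ∫ ω, H ξ ω ∂P = -(1/(N:ℝ)) * ((N:ℝ) * (((N:ℝ)-1) * ((M:ℝ) * r ^ 2))) := by
    have heq : ∀ ω, H ξ ω = -(1/(N:ℝ)) * ∑ i : Fin N, ∑ j ∈ Finset.univ.erase i,
        ∑ a : Fin M, χ (i, a) ω * χ (j, a) ω := by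
      intro ω
      rw [hH]
      congr 1
      refine Finset.sum_congr rfl fun i _ => Finset.sum_congr rfl fun j _ =>
        Finset.sum_congr rfl fun a _ => ?_
      rcases hξ i with h1 | h1 <;> rcases hξ j with h2 | h2 <;> rw [h1, h2] <;> ring
    have h := key (fun i j a ω => χ (i, a) ω * χ (j, a) ω) (fun i j a => hint2 _ _)
    calc ∫ ω, H ξ ω ∂P
        = ∫ ω, -(1/(N:ℝ)) * ∑ i : Fin N, ∑ j ∈ Finset.univ.erase i,
            ∑ a : Fin M, χ (i, a) ω * χ (j, a) ω ∂P := by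
          exact integral_congr_ae (Filter.Eventually.of_forall heq)
      _ = -(1/(N:ℝ)) * ∑ i : Fin N, ∑ j ∈ Finset.univ.erase i, ∑ a : Fin M,
            ∫ ω, χ (i, a) ω * χ (j, a) ω ∂P := h
      _ = -(1/(N:ℝ)) * ∑ i : Fin N, ∑ j ∈ Finset.univ.erase i, ∑ a : Fin M, r ^ 2 := by
          congr 1
          refine Finset.sum_congr rfl fun i _ => Finset.sum_congr rfl fun j hj =>
            Finset.sum_congr rfl fun a _ => ?_
          have hij : i ≠ j := (Finset.ne_of_mem_erase hj).symm
          exact hE2 (i, a) (j, a) (by intro h; exact hij (congrArg Prod.fst h))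
      _ = -(1/(N:ℝ)) * ((N:ℝ) * (((N:ℝ)-1) * ((M:ℝ) * r ^ 2))) := by
          simp only [Finset.sum_const, Finset.card_univ, Fintype.card_fin, nsmul_eq_mul,
            Finset.card_erase_of_mem (Finset.mem_univ _)]
          rw [Nat.cast_sub (by omega : 1 ≤ N)]
          push_cast
          ring
  -- E[H η^c]
  have hterm : ∀ i j : Fin N, i ≠ j → ∀ a : Fin M,
      ∫ ω, (χ (i, a) ω * χ (i, c) ω) * (χ (j, a) ω * χ (j, c) ω) ∂P
        = if a = c then 1 else r ^ 4 := by
    intro i j hij a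
    by_cases hac : a = c
    · subst hac
      rw [if_pos rfl]
      have heq : (fun ω => (χ (i, a) ω * χ (i, a) ω) * (χ (j, a) ω * χ (j, a) ω))
          =ᵐ[P] fun _ => (1:ℝ) := by
        filter_upwards [hsq (i, a), hsq (j, a)] with ω h1 h2
        rw [h1, h2]; norm_num
      rw [integral_congr_ae heq, integral_const]
      simp
    · rw [if_neg hac]
      have hPfst : ∀ (a b : Fin M), ((i, a) : Fin N × Fin M) ≠ (j, b) := by
        intro a b h; exact hij (congrArg Prod.fst h)
      refine hE4 (i, a) (i, c) (j, a) (j, c) ?_ ?_ (hPfst a a) (hPfst a c) (hPfst c a)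
        (hPfst c c)
      · intro h; exact hac (congrArg Prod.snd h)
      · intro h; exact hac (congrArg Prod.snd h)
  have hMsum : ∑ a : Fin M, (if a = c then (1:ℝ) else r ^ 4) = 1 + ((M:ℝ)-1) * r ^ 4 := by
    rw [← Finset.add_sum_erase _ _ (Finset.mem_univ c)]
    rw [if_pos rfl]
    congr 1
    have : ∀ a ∈ Finset.univ.erase c, (if a = c then (1:ℝ) else r ^ 4) = r ^ 4 := by
      intro a ha
      rw [if_neg (Finset.ne_of_mem_erase ha)]
    rw [Finset.sum_congr rfl this]
    simp only [Finset.sum_const, nsmul_eq_mul,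
      Finset.card_erase_of_mem (Finset.mem_univ _), Finset.card_univ, Fintype.card_fin]
    rw [Nat.cast_sub hM]
    push_cast
    ring
  have hHη : ∫ ω, H (fun i => ξ i * χ (i, c) ω) ω ∂P
      = -(1/(N:ℝ)) * ((N:ℝ) * (((N:ℝ)-1) * (1 + ((M:ℝ)-1) * r ^ 4))) := by
    have heq : ∀ ω, H (fun i => ξ i * χ (i, c) ω) ω
        = -(1/(N:ℝ)) * ∑ i : Fin N, ∑ j ∈ Finset.univ.erase i, ∑ a : Fin M,
            (χ (i, a) ω * χ (i, c) ω) * (χ (j, a) ω * χ (j, c) ω) := by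
      intro ω
      rw [hH]
      congr 1
      refine Finset.sum_congr rfl fun i _ => Finset.sum_congr rfl fun j _ =>
        Finset.sum_congr rfl fun a _ => ?_
      rcases hξ i with h1 | h1 <;> rcases hξ j with h2 | h2 <;> rw [h1, h2] <;> ring
    have h := key (fun i j a ω => (χ (i, a) ω * χ (i, c) ω) * (χ (j, a) ω * χ (j, c) ω))
      (fun i j a => hint4 _ _ _ _)
    calc ∫ ω, H (fun i => ξ i * χ (i, c) ω) ω ∂P
        = ∫ ω, -(1/(N:ℝ)) * ∑ i : Fin N, ∑ j ∈ Finset.univ.erase i, ∑ a : Fin M,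
            (χ (i, a) ω * χ (i, c) ω) * (χ (j, a) ω * χ (j, c) ω) ∂P :=
          integral_congr_ae (Filter.Eventually.of_forall heq)
      _ = -(1/(N:ℝ)) * ∑ i : Fin N, ∑ j ∈ Finset.univ.erase i, ∑ a : Fin M,
            ∫ ω, (χ (i, a) ω * χ (i, c) ω) * (χ (j, a) ω * χ (j, c) ω) ∂P := h
      _ = -(1/(N:ℝ)) * ∑ i : Fin N, ∑ j ∈ Finset.univ.erase i,
            (1 + ((M:ℝ)-1) * r ^ 4) := by
          congr 1
          refine Finset.sum_congr rfl fun i _ => Finset.sum_congr rfl fun j hj => ?_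
          have hij : i ≠ j := (Finset.ne_of_mem_erase hj).symm
          rw [Finset.sum_congr rfl fun a _ => hterm i j hij a, hMsum]
      _ = -(1/(N:ℝ)) * ((N:ℝ) * (((N:ℝ)-1) * (1 + ((M:ℝ)-1) * r ^ 4))) := by
          simp only [Finset.sum_const, Finset.card_univ, Fintype.card_fin, nsmul_eq_mul,
            Finset.card_erase_of_mem (Finset.mem_univ _)]
          rw [Nat.cast_sub (by omega : 1 ≤ N)]
          push_cast
          ring
  have hgap : (∫ ω, H ξ ω ∂P) - ∫ ω, H (fun i => ξ i * χ (i, c) ω) ω ∂P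
      = ((N:ℝ) - 1) * (1 + ((M:ℝ) - 1) * r ^ 4 - (M:ℝ) * r ^ 2) := by
    rw [hHξ, hHη]
    field_simp
    ring
  refine ⟨hgap, ?_⟩
  rw [hgap, div_lt_iff₀ (by positivity : (0:ℝ) < r ^ 2)]
  have hNR : (2:ℝ) ≤ (N:ℝ) := by exact_mod_cast hN
  have hMR : (1:ℝ) ≤ (M:ℝ) := by exact_mod_cast hM
  have hfact : 1 + ((M:ℝ) - 1) * r ^ 4 - (M:ℝ) * r ^ 2
      = (1 - r ^ 2) * (1 + r ^ 2 - (M:ℝ) * r ^ 2) := by ring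
  have h1r : (0:ℝ) < 1 - r ^ 2 := by nlinarith
  have hNpos : (0:ℝ) < (N:ℝ) - 1 := by linarith
  constructor
  · intro h
    by_contra h'
    push_neg at h'
    have h'' : (0:ℝ) ≤ 1 + r ^ 2 - (M:ℝ) * r ^ 2 := by linarith
    have hX : 0 ≤ 1 + ((M:ℝ) - 1) * r ^ 4 - (M:ℝ) * r ^ 2 := by
      rw [hfact]; exact mul_nonneg h1r.le h''
    nlinarith [mul_nonneg hNpos.le hX]
  · intro h
    have hX : 1 + ((M:ℝ) - 1) * r ^ 4 - (M:ℝ) * r ^ 2 < 0 := by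
      rw [hfact]
      exact mul_neg_of_pos_of_neg h1r (by linarith)
    exact mul_neg_of_pos_of_neg hNpos hX
end

section
/- In the multi-archetype model, for any index i, the signal felt by the example η^{1,1}, namely h_i η_i^{1,1} = (1/N) Σ_{j≠i} Σ_{μ=1}^K Σ_{a=1}^M η_i^{μ,a} η_j^{μ,a} η_i^{1,1} η_j^{1,1}, has expectation E[h_i η_i^{1,1}] = ((N−1)/N)·(1 + (M−1)·(2p−1)⁴), independent of K, where the expectation is over both the archetypes and the noise. -/
open MeasureTheory ProbabilityTheory

section Aux

variable {Ω : Type*} [MeasurableSpace Ω] {P : Measure Ω} [IsProbabilityMeasure P]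

/-- For a two-point `{1,-1}` valued (a.e.) random variable, a.e. membership. -/
lemma twoPoint_ae {f : Ω → ℝ} (hf : Measurable f) {a b : ℝ}
    (hab : a + b = 1)
    (h1 : P {ω | f ω = 1} = ENNReal.ofReal a) (hm1 : P {ω | f ω = -1} = ENNReal.ofReal b) :
    ∀ᵐ ω ∂P, f ω = 1 ∨ f ω = -1 := by
  set A : Set Ω := {ω | f ω = 1} with hA
  set B : Set Ω := {ω | f ω = -1} with hB
  have hAm : MeasurableSet A := hf (measurableSet_singleton 1)
  have hBm : MeasurableSet B := hf (measurableSet_singleton (-1))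
  have hdisj : Disjoint A B := by
    rw [Set.disjoint_left]
    intro ω h1' h2'
    simp only [A, B, Set.mem_setOf_eq] at h1' h2'
    rw [h1'] at h2'
    norm_num at h2'
  have ha0 : 0 ≤ a := by
    by_contra h
    push_neg at h
    rw [ENNReal.ofReal_of_nonpos h.le] at h1
    have hb1 : 1 < b := by linarith
    have := measure_mono (μ := P) (Set.subset_univ B)
    rw [hm1, measure_univ] at this
    have := (ENNReal.ofReal_le_one).mp this
    linarith
  have hb0 : 0 ≤ b := by
    by_contra h
    push_neg at h
    rw [ENNReal.ofReal_of_nonpos h.le] at hm1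
    have ha1 : 1 < a := by linarith
    have := measure_mono (μ := P) (Set.subset_univ A)
    rw [h1, measure_univ] at this
    have := (ENNReal.ofReal_le_one).mp this
    linarith
  have hunion : P (A ∪ B) = 1 := by
    rw [measure_union hdisj hBm, h1, hm1, ← ENNReal.ofReal_add ha0 hb0, hab,
      ENNReal.ofReal_one]
  have hcompl : P (A ∪ B)ᶜ = 0 := by
    rw [measure_compl (hAm.union hBm) (measure_ne_top _ _), hunion, measure_univ, tsub_self]
  have hset : {ω | ¬(f ω = 1 ∨ f ω = -1)} = (A ∪ B)ᶜ := by
    ext ω; simp [A, B, not_or]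
  rw [ae_iff, hset]
  exact hcompl

lemma twoPoint_integral {f : Ω → ℝ} (hf : Measurable f) {a b : ℝ}
    (ha : 0 ≤ a) (hb : 0 ≤ b) (hab : a + b = 1)
    (h1 : P {ω | f ω = 1} = ENNReal.ofReal a) (hm1 : P {ω | f ω = -1} = ENNReal.ofReal b) :
    ∫ ω, f ω ∂P = a - b := by
  set A : Set Ω := {ω | f ω = 1} with hA
  set B : Set Ω := {ω | f ω = -1} with hB
  have hAm : MeasurableSet A := hf (measurableSet_singleton 1)
  have hBm : MeasurableSet B := hf (measurableSet_singleton (-1))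
  have hae := twoPoint_ae hf hab h1 hm1
  have heq : f =ᵐ[P] fun ω =>
      A.indicator (fun _ => (1:ℝ)) ω - B.indicator (fun _ => (1:ℝ)) ω := by
    filter_upwards [hae] with ω hω
    rcases hω with hω | hω
    · have hωB : ω ∉ B := by simp only [B, Set.mem_setOf_eq, hω]; norm_num
      simp [A, B, Set.indicator_of_mem, hω, Set.indicator_of_notMem hωB]
    · have hωA : ω ∉ A := by simp only [A, Set.mem_setOf_eq, hω]; norm_num
      simp [A, B, Set.indicator_of_notMem hωA, Set.indicator_of_mem, hω]
  rw [integral_congr_ae heq, integral_sub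
    ((integrable_const (1:ℝ)).indicator hAm) ((integrable_const (1:ℝ)).indicator hBm)]
  rw [integral_indicator_const (1:ℝ) hAm, integral_indicator_const (1:ℝ) hBm,
    measureReal_def, measureReal_def, h1, hm1, ENNReal.toReal_ofReal ha, ENNReal.toReal_ofReal hb]
  simp

/-- Integral of a product over a finset of jointly independent real random variables. -/
lemma integral_finset_prod_of_iIndep {ι : Type*} {g : ι → Ω → ℝ}
    (hm : ∀ k, Measurable (g k))
    (hind : iIndepFun g P) (s : Finset ι) :
    ∫ ω, ∏ k ∈ s, g k ω ∂P = ∏ k ∈ s, ∫ ω, g k ω ∂P := by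
  classical
  induction s using Finset.induction_on with
  | empty => simp
  | @insert c s ha ih =>
    have hprodmeas : Measurable fun ω => ∏ k ∈ s, g k ω := by
      have h := Finset.measurable_prod (s := s) (f := g) (fun k _ => hm k)
      simpa [Finset.prod_apply] using h
    have hInd : IndepFun (g c) (fun ω => ∏ k ∈ s, g k ω) P := by
      have h := hind.indepFun_finsetProd_of_notMem hm ha
      have : (∏ j ∈ s, g j) = fun ω => ∏ j ∈ s, g j ω := by
        funext ω; exact Finset.prod_apply ω s g
      rw [this] at h
      exact h.symm
    simp only [Finset.prod_insert ha]
    rw [← ih]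
    exact hInd.integral_mul_eq_mul_integral (hm c).aestronglyMeasurable hprodmeas.aestronglyMeasurable


lemma abs_mul_le_one' {x y : ℝ} (hx : |x| ≤ 1) (hy : |y| ≤ 1) : |x * y| ≤ 1 := by
  rw [abs_mul]
  calc |x| * |y| ≤ 1 * 1 := mul_le_mul hx hy (abs_nonneg _) zero_le_one
    _ = 1 := by ring

/-- The expectation of a single monomial term in the multi-archetype field. -/
lemma term_integral {Ω : Type*} [MeasurableSpace Ω] {P : Measure Ω} [IsProbabilityMeasure P]
    {N K M : ℕ} {ξ : Fin N × Fin K → Ω → ℝ} {χ : Fin N × Fin K × Fin M → Ω → ℝ}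
    (hξmeas : ∀ k, Measurable (ξ k)) (hχmeas : ∀ k, Measurable (χ k))
    (hξae : ∀ k, ∀ᵐ ω ∂P, ξ k ω = 1 ∨ ξ k ω = -1)
    (hχae : ∀ k, ∀ᵐ ω ∂P, χ k ω = 1 ∨ χ k ω = -1)
    (r : ℝ)
    (Eξ : ∀ k, ∫ ω, ξ k ω ∂P = 0) (Eχ : ∀ k, ∫ ω, χ k ω ∂P = r)
    (hindep : iIndepFun (Sum.elim ξ χ) P)
    (i j : Fin N) (hij : i ≠ j) (z : Fin K) (z' : Fin M) (ν : Fin K) (a : Fin M) :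
    ∫ ω, (ξ (i, ν) ω * χ (i, ν, a) ω) * (ξ (j, ν) ω * χ (j, ν, a) ω) *
        ((ξ (i, z) ω * χ (i, z, z') ω) * (ξ (j, z) ω * χ (j, z, z') ω)) ∂P
      = if ν = z then (if a = z' then 1 else r ^ 4) else 0 := by
  classical
  have hgm : ∀ k, Measurable (Sum.elim ξ χ k) := by
    rintro (k | k)
    · exact hξmeas k
    · exact hχmeas k
  by_cases hν : ν = z
  · subst hν
    by_cases ha : a = z'
    · subst ha
      rw [if_pos rfl, if_pos rfl]
      have hone : (fun ω => (ξ (i, ν) ω * χ (i, ν, a) ω) * (ξ (j, ν) ω * χ (j, ν, a) ω) *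
          ((ξ (i, ν) ω * χ (i, ν, a) ω) * (ξ (j, ν) ω * χ (j, ν, a) ω)))
          =ᵐ[P] (fun _ => (1 : ℝ)) := by
        filter_upwards [hξae (i, ν), hξae (j, ν), hχae (i, ν, a), hχae (j, ν, a)]
          with ω h1 h2 h3 h4
        rcases h1 with h1 | h1 <;> rcases h2 with h2 | h2 <;>
          rcases h3 with h3 | h3 <;> rcases h4 with h4 | h4 <;>
          rw [h1, h2, h3, h4] <;> ring
      rw [integral_congr_ae hone]
      simp
    · rw [if_pos rfl, if_neg ha]
      have h1 : (Sum.inr (i, ν, a) : (Fin N × Fin K) ⊕ (Fin N × Fin K × Fin M)) ∉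
          ({Sum.inr (j, ν, a), Sum.inr (i, ν, z'), Sum.inr (j, ν, z')} :
            Finset ((Fin N × Fin K) ⊕ (Fin N × Fin K × Fin M))) := by
        simp [hij, ha]
      have h2 : (Sum.inr (j, ν, a) : (Fin N × Fin K) ⊕ (Fin N × Fin K × Fin M)) ∉
          ({Sum.inr (i, ν, z'), Sum.inr (j, ν, z')} :
            Finset ((Fin N × Fin K) ⊕ (Fin N × Fin K × Fin M))) := by
        simp [hij, ha]
      have h3 : (Sum.inr (i, ν, z') : (Fin N × Fin K) ⊕ (Fin N × Fin K × Fin M)) ∉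
          ({Sum.inr (j, ν, z')} :
            Finset ((Fin N × Fin K) ⊕ (Fin N × Fin K × Fin M))) := by
        simp [hij]
      have hae : (fun ω => (ξ (i, ν) ω * χ (i, ν, a) ω) * (ξ (j, ν) ω * χ (j, ν, a) ω) *
          ((ξ (i, ν) ω * χ (i, ν, z') ω) * (ξ (j, ν) ω * χ (j, ν, z') ω)))
          =ᵐ[P] (fun ω => ∏ s ∈ ({Sum.inr (i, ν, a), Sum.inr (j, ν, a),
              Sum.inr (i, ν, z'), Sum.inr (j, ν, z')} :
              Finset ((Fin N × Fin K) ⊕ (Fin N × Fin K × Fin M))), Sum.elim ξ χ s ω) := by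
        filter_upwards [hξae (i, ν), hξae (j, ν)] with ω hx hy
        rw [Finset.prod_insert h1, Finset.prod_insert h2, Finset.prod_insert h3,
          Finset.prod_singleton]
        simp only [Sum.elim_inr]
        rcases hx with hx | hx <;> rcases hy with hy | hy <;> rw [hx, hy] <;> ring
      rw [integral_congr_ae hae,
        integral_finset_prod_of_iIndep hgm hindep,
        Finset.prod_insert h1, Finset.prod_insert h2, Finset.prod_insert h3,
        Finset.prod_singleton]
      simp only [Sum.elim_inr]
      rw [Eχ, Eχ, Eχ, Eχ]
      ring
  · rw [if_neg hν]
    have h1 : (Sum.inl (i, ν) : (Fin N × Fin K) ⊕ (Fin N × Fin K × Fin M)) ∉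
        ({Sum.inl (j, ν), Sum.inl (i, z), Sum.inl (j, z), Sum.inr (i, ν, a),
          Sum.inr (j, ν, a), Sum.inr (i, z, z'), Sum.inr (j, z, z')} :
          Finset ((Fin N × Fin K) ⊕ (Fin N × Fin K × Fin M))) := by
      simp [hij, hν]
    have h2 : (Sum.inl (j, ν) : (Fin N × Fin K) ⊕ (Fin N × Fin K × Fin M)) ∉
        ({Sum.inl (i, z), Sum.inl (j, z), Sum.inr (i, ν, a),
          Sum.inr (j, ν, a), Sum.inr (i, z, z'), Sum.inr (j, z, z')} :
          Finset ((Fin N × Fin K) ⊕ (Fin N × Fin K × Fin M))) := by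
      simp [hij, hν]
    have h3 : (Sum.inl (i, z) : (Fin N × Fin K) ⊕ (Fin N × Fin K × Fin M)) ∉
        ({Sum.inl (j, z), Sum.inr (i, ν, a),
          Sum.inr (j, ν, a), Sum.inr (i, z, z'), Sum.inr (j, z, z')} :
          Finset ((Fin N × Fin K) ⊕ (Fin N × Fin K × Fin M))) := by
      simp [hij]
    have h4 : (Sum.inl (j, z) : (Fin N × Fin K) ⊕ (Fin N × Fin K × Fin M)) ∉
        ({Sum.inr (i, ν, a),
          Sum.inr (j, ν, a), Sum.inr (i, z, z'), Sum.inr (j, z, z')} :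
          Finset ((Fin N × Fin K) ⊕ (Fin N × Fin K × Fin M))) := by
      simp
    have h5 : (Sum.inr (i, ν, a) : (Fin N × Fin K) ⊕ (Fin N × Fin K × Fin M)) ∉
        ({Sum.inr (j, ν, a), Sum.inr (i, z, z'), Sum.inr (j, z, z')} :
          Finset ((Fin N × Fin K) ⊕ (Fin N × Fin K × Fin M))) := by
      simp [hij, hν]
    have h6 : (Sum.inr (j, ν, a) : (Fin N × Fin K) ⊕ (Fin N × Fin K × Fin M)) ∉
        ({Sum.inr (i, z, z'), Sum.inr (j, z, z')} :
          Finset ((Fin N × Fin K) ⊕ (Fin N × Fin K × Fin M))) := by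
      simp [hij, hν]
    have h7 : (Sum.inr (i, z, z') : (Fin N × Fin K) ⊕ (Fin N × Fin K × Fin M)) ∉
        ({Sum.inr (j, z, z')} :
          Finset ((Fin N × Fin K) ⊕ (Fin N × Fin K × Fin M))) := by
      simp [hij]
    have hpt : (fun ω => (ξ (i, ν) ω * χ (i, ν, a) ω) * (ξ (j, ν) ω * χ (j, ν, a) ω) *
        ((ξ (i, z) ω * χ (i, z, z') ω) * (ξ (j, z) ω * χ (j, z, z') ω)))
        = (fun ω => ∏ s ∈ ({Sum.inl (i, ν), Sum.inl (j, ν), Sum.inl (i, z), Sum.inl (j, z),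
            Sum.inr (i, ν, a), Sum.inr (j, ν, a), Sum.inr (i, z, z'), Sum.inr (j, z, z')} :
            Finset ((Fin N × Fin K) ⊕ (Fin N × Fin K × Fin M))), Sum.elim ξ χ s ω) := by
      funext ω
      rw [Finset.prod_insert h1, Finset.prod_insert h2, Finset.prod_insert h3,
        Finset.prod_insert h4, Finset.prod_insert h5, Finset.prod_insert h6,
        Finset.prod_insert h7, Finset.prod_singleton]
      simp only [Sum.elim_inl, Sum.elim_inr]
      ring
    rw [hpt, integral_finset_prod_of_iIndep hgm hindep]
    refine Finset.prod_eq_zero (Finset.mem_insert_self _ _) ?_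
    simpa using Eξ (i, ν)

end Aux

/-- In the multi-archetype model, for any index `i`, the signal felt by
the example `η^{1,1}`, namely `h_i η_i^{1,1} = Σ_{j≠i} J_{ij} η_i^{1,1} η_j^{1,1}`, has
expectation `E[h_i η_i^{1,1}] = ((N-1)/N) * (1 + (M-1)*(2p-1)^4)`, independent of `K`,
over both archetypes and noise. -/
theorem multi_archetype_example_field_expectation
    {Ω : Type*} [MeasurableSpace Ω] (P : Measure Ω) [IsProbabilityMeasure P]
    (N K M : ℕ) (hN : 2 ≤ N) (hK : 1 ≤ K) (hM : 1 ≤ M)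
    (p : ℝ) (hp : p ∈ Set.Icc (1 / 2 : ℝ) 1)
    (ξ : Fin N × Fin K → Ω → ℝ) (χ : Fin N × Fin K × Fin M → Ω → ℝ)
    (hξmeas : ∀ k, Measurable (ξ k)) (hχmeas : ∀ k, Measurable (χ k))
    (hξ1 : ∀ k, P {ω | ξ k ω = 1} = ENNReal.ofReal (1 / 2))
    (hξm1 : ∀ k, P {ω | ξ k ω = -1} = ENNReal.ofReal (1 / 2))
    (hχ1 : ∀ k, P {ω | χ k ω = 1} = ENNReal.ofReal p)
    (hχm1 : ∀ k, P {ω | χ k ω = -1} = ENNReal.ofReal (1 - p))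
    (hindep : iIndepFun (Sum.elim ξ χ) P)
    (J : Fin N → Fin N → Ω → ℝ)
    (hJ : ∀ i j ω, J i j ω =
      (1 / N) * ∑ ν : Fin K, ∑ a : Fin M,
        (ξ (i, ν) ω * χ (i, ν, a) ω) * (ξ (j, ν) ω * χ (j, ν, a) ω))
    (i : Fin N) :
    ∫ ω, (∑ j ∈ Finset.univ.erase i,
        J i j ω *
          ((ξ (i, (⟨0, hK⟩ : Fin K)) ω * χ (i, (⟨0, hK⟩ : Fin K), (⟨0, hM⟩ : Fin M)) ω) *
           (ξ (j, (⟨0, hK⟩ : Fin K)) ω * χ (j, (⟨0, hK⟩ : Fin K), (⟨0, hM⟩ : Fin M)) ω))) ∂P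
      = ((N - 1) / N) * (1 + (M - 1) * (2 * p - 1) ^ 4) := by
  classical
  obtain ⟨hp1, hp2⟩ := hp
  set z : Fin K := ⟨0, hK⟩ with hzdef
  set z' : Fin M := ⟨0, hM⟩ with hz'def
  set r : ℝ := 2 * p - 1 with hrdef
  have hξae : ∀ k, ∀ᵐ ω ∂P, ξ k ω = 1 ∨ ξ k ω = -1 :=
    fun k => twoPoint_ae (hξmeas k) (by norm_num) (hξ1 k) (hξm1 k)
  have hχae : ∀ k, ∀ᵐ ω ∂P, χ k ω = 1 ∨ χ k ω = -1 :=
    fun k => twoPoint_ae (hχmeas k) (by ring) (hχ1 k) (hχm1 k)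
  have Eξ : ∀ k, ∫ ω, ξ k ω ∂P = 0 := fun k => by
    have h := twoPoint_integral (hξmeas k) (by norm_num) (by norm_num) (by norm_num)
      (hξ1 k) (hξm1 k)
    linarith
  have Eχ : ∀ k, ∫ ω, χ k ω ∂P = r := fun k => by
    have h := twoPoint_integral (hχmeas k) (by linarith) (by linarith) (by ring)
      (hχ1 k) (hχm1 k)
    rw [hrdef]; linarith
  have hmeasT : ∀ (j : Fin N) (ν : Fin K) (a : Fin M),
      Measurable (fun ω => (ξ (i, ν) ω * χ (i, ν, a) ω) * (ξ (j, ν) ω * χ (j, ν, a) ω) * ((ξ (i, z) ω * χ (i, z, z') ω) * (ξ (j, z) ω * χ (j, z, z') ω))) :=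
    fun j ν a =>
      (((hξmeas (i, ν)).mul (hχmeas (i, ν, a))).mul
        ((hξmeas (j, ν)).mul (hχmeas (j, ν, a)))).mul
      (((hξmeas (i, z)).mul (hχmeas (i, z, z'))).mul
        ((hξmeas (j, z)).mul (hχmeas (j, z, z'))))
  have hone : ∀ x : ℝ, x = 1 ∨ x = -1 → |x| ≤ 1 := by rintro x (rfl | rfl) <;> norm_num
  have hint : ∀ (j : Fin N) (ν : Fin K) (a : Fin M),
      Integrable (fun ω => (ξ (i, ν) ω * χ (i, ν, a) ω) * (ξ (j, ν) ω * χ (j, ν, a) ω) * ((ξ (i, z) ω * χ (i, z, z') ω) * (ξ (j, z) ω * χ (j, z, z') ω))) P := by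
    intro j ν a
    refine Integrable.mono' (integrable_const 1) (hmeasT j ν a).aestronglyMeasurable ?_
    filter_upwards [hξae (i, ν), hξae (j, ν), hξae (i, z), hξae (j, z),
      hχae (i, ν, a), hχae (j, ν, a), hχae (i, z, z'), hχae (j, z, z')]
      with ω a1 a2 a3 a4 a5 a6 a7 a8
    rw [Real.norm_eq_abs]
    exact abs_mul_le_one'
      (abs_mul_le_one' (abs_mul_le_one' (hone _ a1) (hone _ a5))
        (abs_mul_le_one' (hone _ a2) (hone _ a6)))
      (abs_mul_le_one' (abs_mul_le_one' (hone _ a3) (hone _ a7))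
        (abs_mul_le_one' (hone _ a4) (hone _ a8)))
  have key : ∀ (j : Fin N), j ≠ i → ∀ (ν : Fin K) (a : Fin M),
      ∫ ω, (1 / (N : ℝ)) * ((ξ (i, ν) ω * χ (i, ν, a) ω) * (ξ (j, ν) ω * χ (j, ν, a) ω) * ((ξ (i, z) ω * χ (i, z, z') ω) * (ξ (j, z) ω * χ (j, z, z') ω))) ∂P
        = (1 / (N : ℝ)) * (if ν = z then (if a = z' then 1 else r ^ 4) else 0) := by
    intro j hj ν a
    rw [integral_const_mul,
      term_integral hξmeas hχmeas hξae hχae r Eξ Eχ hindep i j (Ne.symm hj) z z' ν a]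
  have hrw : ∀ ω, (∑ j ∈ Finset.univ.erase i,
      J i j ω * ((ξ (i, z) ω * χ (i, z, z') ω) * (ξ (j, z) ω * χ (j, z, z') ω)))
      = ∑ j ∈ Finset.univ.erase i, ∑ ν : Fin K, ∑ a : Fin M,
          (1 / (N : ℝ)) * ((ξ (i, ν) ω * χ (i, ν, a) ω) * (ξ (j, ν) ω * χ (j, ν, a) ω) * ((ξ (i, z) ω * χ (i, z, z') ω) * (ξ (j, z) ω * χ (j, z, z') ω))) := by
    intro ω
    refine Finset.sum_congr rfl fun j _ => ?_
    rw [hJ]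
    simp only [Finset.sum_mul, Finset.mul_sum]
    exact Finset.sum_congr rfl fun ν _ => Finset.sum_congr rfl fun a _ => by ring
  have step1 : ∫ ω, (∑ j ∈ Finset.univ.erase i,
        J i j ω * ((ξ (i, z) ω * χ (i, z, z') ω) * (ξ (j, z) ω * χ (j, z, z') ω))) ∂P
      = ∑ j ∈ Finset.univ.erase i, ∑ ν : Fin K, ∑ a : Fin M,
          (1 / (N : ℝ)) * (if ν = z then (if a = z' then 1 else r ^ 4) else 0) := by
    rw [integral_congr_ae (Filter.Eventually.of_forall hrw)]
    rw [integral_finset_sum _ (fun j _ => integrable_finset_sum _ fun ν _ =>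
      integrable_finset_sum _ fun a _ => (hint j ν a).const_mul _)]
    refine Finset.sum_congr rfl fun j hj => ?_
    rw [integral_finset_sum _ (fun ν _ => integrable_finset_sum _ fun a _ =>
      (hint j ν a).const_mul _)]
    refine Finset.sum_congr rfl fun ν _ => ?_
    rw [integral_finset_sum _ (fun a _ => (hint j ν a).const_mul _)]
    exact Finset.sum_congr rfl fun a _ => key j (Finset.ne_of_mem_erase hj) ν a
  rw [step1]
  have hsum_a : ∑ a : Fin M, (if a = z' then (1 : ℝ) else r ^ 4)
      = 1 + ((M : ℝ) - 1) * r ^ 4 := by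
    rw [← Finset.add_sum_erase _ _ (Finset.mem_univ z'), if_pos rfl,
      Finset.sum_congr rfl (fun a ha => if_neg (Finset.ne_of_mem_erase ha)),
      Finset.sum_const, Finset.card_erase_of_mem (Finset.mem_univ z'),
      Finset.card_univ, Fintype.card_fin, nsmul_eq_mul, Nat.cast_sub hM]
    push_cast
    ring
  have hsum_νa : ∑ ν : Fin K, ∑ a : Fin M,
      (1 / (N : ℝ)) * (if ν = z then (if a = z' then 1 else r ^ 4) else 0)
      = (1 / (N : ℝ)) * (1 + ((M : ℝ) - 1) * r ^ 4) := by
    rw [Finset.sum_eq_single z]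
    · simp only [eq_self_iff_true, if_true]
      rw [← Finset.mul_sum, hsum_a]
    · intro ν _ hν
      simp [hν]
    · intro h
      exact absurd (Finset.mem_univ z) h
  rw [Finset.sum_congr rfl (fun j _ => hsum_νa), Finset.sum_const,
    Finset.card_erase_of_mem (Finset.mem_univ i), Finset.card_univ, Fintype.card_fin,
    nsmul_eq_mul, Nat.cast_sub (by omega : 1 ≤ N)]
  push_cast
  ring
end

section
/- Critical point of the zero-temperature self-consistency equation m = erf(m/√(2ρ)): for every ρ ≥ 2/π, the only real solution of m = erf(m/√(2ρ)) is m = 0; whereas for every ρ with 0 < ρ < 2/π, there exists exactly one m > 0 satisfying m = erf(m/√(2ρ)) (and, by oddness of erf, −m is also a solution). Hence the critical load is ρ_c = 2/π. -/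
open MeasureTheory

/-- The error function `erf x = (2/√π) ∫₀ˣ exp(-t²) dt`. -/
noncomputable def erf (x : ℝ) : ℝ :=
  (2 / Real.sqrt Real.pi) * ∫ t in (0 : ℝ)..x, Real.exp (-t ^ 2)

lemma gauss_cont : Continuous fun t : ℝ => Real.exp (-t ^ 2) := by
  continuity

lemma erf_zero : erf 0 = 0 := by simp [erf]

lemma erf_hasDerivAt (x : ℝ) :
    HasDerivAt erf ((2 / Real.sqrt Real.pi) * Real.exp (-x ^ 2)) x := by
  have h := (intervalIntegral.integral_hasDerivAt_right
    (gauss_cont.intervalIntegrable 0 x)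
    (gauss_cont.aestronglyMeasurable.stronglyMeasurableAtFilter)
    gauss_cont.continuousAt).const_mul (2 / Real.sqrt Real.pi)
  exact h

lemma erf_continuous : Continuous erf :=
  continuous_iff_continuousAt.2 fun x => (erf_hasDerivAt x).differentiableAt.continuousAt

lemma erf_neg (x : ℝ) : erf (-x) = - erf x := by
  unfold erf
  rw [← mul_neg]
  congr 1
  have h1 : (∫ t in (0:ℝ)..(-x), Real.exp (-t ^ 2))
      = ∫ t in (0:ℝ)..(-x), (fun s : ℝ => Real.exp (-s ^ 2)) (-t) := by
    simp
  rw [h1, intervalIntegral.integral_comp_neg (fun s : ℝ => Real.exp (-s ^ 2)),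
    neg_neg, neg_zero, intervalIntegral.integral_symm]

lemma integral_gauss_lt {y : ℝ} (hy : 0 < y) :
    (∫ t in (0:ℝ)..y, Real.exp (-t ^ 2)) < y := by
  have h := intervalIntegral.integral_lt_integral_of_continuousOn_of_le_of_exists_lt hy
    gauss_cont.continuousOn (continuousOn_const (c := (1:ℝ)))
    (fun t _ => Real.exp_le_one_iff.2 (neg_nonpos.2 (sq_nonneg _)))
    ⟨y, ⟨hy.le, le_refl y⟩, Real.exp_lt_one_iff.2 (by nlinarith)⟩
  simpa using h

lemma integral_gauss_le_two {x : ℝ} (hx : 0 ≤ x) :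
    (∫ t in (0:ℝ)..x, Real.exp (-t ^ 2)) ≤ 2 := by
  rcases le_or_gt x 1 with h | h
  · calc (∫ t in (0:ℝ)..x, Real.exp (-t ^ 2)) ≤ ∫ _t in (0:ℝ)..x, (1:ℝ) := by
          apply intervalIntegral.integral_mono_on hx
            (gauss_cont.intervalIntegrable 0 x) intervalIntegrable_const
          intro t _
          exact Real.exp_le_one_iff.2 (neg_nonpos.2 (sq_nonneg _))
      _ = x := by simp
      _ ≤ 2 := by linarith
  · have hsplit : (∫ t in (0:ℝ)..1, Real.exp (-t ^ 2)) + (∫ t in (1:ℝ)..x, Real.exp (-t ^ 2))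
        = ∫ t in (0:ℝ)..x, Real.exp (-t ^ 2) :=
      intervalIntegral.integral_add_adjacent_intervals
        (gauss_cont.intervalIntegrable 0 1) (gauss_cont.intervalIntegrable 1 x)
    rw [← hsplit]
    have h1 : (∫ t in (0:ℝ)..1, Real.exp (-t ^ 2)) ≤ 1 := by
      calc (∫ t in (0:ℝ)..1, Real.exp (-t ^ 2)) ≤ ∫ _t in (0:ℝ)..1, (1:ℝ) := by
            apply intervalIntegral.integral_mono_on zero_le_one
              (gauss_cont.intervalIntegrable 0 1) intervalIntegrable_const
            intro t _
            exact Real.exp_le_one_iff.2 (neg_nonpos.2 (sq_nonneg _))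
        _ = 1 := by simp
    have h2 : (∫ t in (1:ℝ)..x, Real.exp (-t ^ 2)) ≤ 1 := by
      have hcomp : (∫ t in (1:ℝ)..x, Real.exp (-t ^ 2)) ≤ ∫ t in (1:ℝ)..x, Real.exp (-t) := by
        apply intervalIntegral.integral_mono_on h.le
          (gauss_cont.intervalIntegrable 1 x)
          ((Real.continuous_exp.comp continuous_neg).intervalIntegrable 1 x)
        intro t ht
        have hle : -t ^ 2 ≤ -t := by nlinarith [ht.1, sq_nonneg (t - 1)]
        simpa using Real.exp_le_exp.2 hle
      have hval : (∫ t in (1:ℝ)..x, Real.exp (-t)) = Real.exp (-1) - Real.exp (-x) := by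
        rw [show (fun t : ℝ => Real.exp (-t)) = fun t : ℝ => Real.exp (-t) from rfl]
        have := intervalIntegral.integral_comp_neg (a := (1:ℝ)) (b := x) Real.exp
        rw [this, integral_exp]
      calc (∫ t in (1:ℝ)..x, Real.exp (-t ^ 2)) ≤ Real.exp (-1) - Real.exp (-x) := by
            rw [← hval]; exact hcomp
        _ ≤ 1 := by nlinarith [Real.exp_pos (-x), Real.exp_le_one_iff.2 (by norm_num : (-1:ℝ) ≤ 0)]
    linarith

lemma sqrt_pi_pos : 0 < Real.sqrt Real.pi := Real.sqrt_pos.2 Real.pi_pos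

lemma erf_strictConcave : StrictConcaveOn ℝ (Set.Ici (0:ℝ)) erf := by
  apply strictConcaveOn_of_deriv2_neg (convex_Ici 0) (erf_continuous.continuousOn)
  intro x hx
  rw [interior_Ici] at hx
  have hd : deriv erf = fun y : ℝ => (2 / Real.sqrt Real.pi) * Real.exp (-y ^ 2) :=
    funext fun y => (erf_hasDerivAt y).deriv
  have h2 : HasDerivAt (fun y : ℝ => (2 / Real.sqrt Real.pi) * Real.exp (-y ^ 2))
      ((2 / Real.sqrt Real.pi) * (Real.exp (-x ^ 2) * (-(2 * x)))) x := by
    have hinner : HasDerivAt (fun y : ℝ => -y ^ 2) (-(2 * x)) x := by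
      simpa using (hasDerivAt_pow 2 x).fun_neg
    exact ((Real.hasDerivAt_exp (-x ^ 2)).comp x hinner).const_mul _
  have : deriv^[2] erf x = (2 / Real.sqrt Real.pi) * (Real.exp (-x ^ 2) * (-(2 * x))) := by
    show deriv (deriv erf) x = _
    rw [hd]
    exact h2.deriv
  rw [this]
  have h1 : 0 < 2 / Real.sqrt Real.pi := by positivity
  have h3 : 0 < Real.exp (-x ^ 2) := Real.exp_pos _
  have hx' : 0 < x := hx
  nlinarith [mul_pos (mul_pos h1 h3) hx']

lemma fixed_unique {c m₁ m₂ : ℝ} (hc : 0 < c) (h1 : 0 < m₁) (h2 : 0 < m₂)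
    (e1 : m₁ = erf (m₁ / c)) (e2 : m₂ = erf (m₂ / c)) : m₁ = m₂ := by
  -- key: if 0 < a < b are both fixed points, strict concavity gives a contradiction
  have key : ∀ a b : ℝ, 0 < a → 0 < b → a < b →
      a = erf (a / c) → b = erf (b / c) → False := by
    intro a b ha hb hab ea eb
    have hne : (0:ℝ) ≠ b / c := by positivity
    have hw1 : (0:ℝ) < 1 - a / b := by
      have : a / b < 1 := (div_lt_one hb).2 hab
      linarith
    have hw2 : (0:ℝ) < a / b := by positivity
    have hcon := erf_strictConcave.2 (Set.self_mem_Ici)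
      (Set.mem_Ici.2 (by positivity : (0:ℝ) ≤ b / c)) hne hw1 hw2 (by ring)
    simp only [smul_eq_mul, mul_zero, erf_zero, zero_add] at hcon
    have hxeq : a / b * (b / c) = a / c := by field_simp
    rw [hxeq] at hcon
    -- hcon : (1 - a/b) * 0 + a/b * erf (b/c) < erf (a/c)
    rw [← ea, ← eb] at hcon
    have : a / b * b = a := by field_simp
    nlinarith
  rcases lt_trichotomy m₁ m₂ with h | h | h
  · exact absurd (key m₁ m₂ h1 h2 h e1 e2) not_false
  · exact h
  · exact absurd (key m₂ m₁ h2 h1 h e2 e1) not_false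

lemma sqrt_four_div_pi : Real.sqrt (4 / Real.pi) = 2 / Real.sqrt Real.pi := by
  rw [Real.sqrt_div (by norm_num : (0:ℝ) ≤ 4)]
  congr 1
  rw [show (4:ℝ) = 2 ^ 2 by norm_num, Real.sqrt_sq (by norm_num : (0:ℝ) ≤ 2)]

/-- Critical point of the zero-temperature self-consistency equation
`m = erf(m/√(2ρ))`: for every `ρ ≥ 2/π` the only real solution is `m = 0`, whereas for
every `0 < ρ < 2/π` there exists exactly one `m > 0` solving the equation (and, by
oddness of `erf`, `-m` is then also a solution).  Hence the critical load is
`ρ_c = 2/π`. -/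
theorem critical_point_self_consistency :
    (∀ ρ : ℝ, 2 / Real.pi ≤ ρ →
      ∀ m : ℝ, m = erf (m / Real.sqrt (2 * ρ)) → m = 0)
    ∧ (∀ ρ : ℝ, 0 < ρ → ρ < 2 / Real.pi →
        (∃! m : ℝ, 0 < m ∧ m = erf (m / Real.sqrt (2 * ρ)))
        ∧ (∀ m : ℝ, m = erf (m / Real.sqrt (2 * ρ)) →
            -m = erf (-m / Real.sqrt (2 * ρ)))) := by
  have hπ : 0 < Real.pi := Real.pi_pos
  constructor
  · -- ρ ≥ 2/π : only solution is 0
    intro ρ hρ m hm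
    have hρpos : 0 < ρ := lt_of_lt_of_le (by positivity) hρ
    set c := Real.sqrt (2 * ρ) with hc
    have hcpos : 0 < c := Real.sqrt_pos.2 (by linarith)
    have hcge : 2 / Real.sqrt Real.pi ≤ c := by
      rw [← sqrt_four_div_pi, hc]
      apply Real.sqrt_le_sqrt
      rw [div_le_iff₀ hπ]
      rw [div_le_iff₀ hπ] at hρ
      linarith
    have hpos : ∀ m' : ℝ, 0 < m' → m' = erf (m' / c) → False := by
      intro m' hm' he
      have hdiv : 0 < m' / c := div_pos hm' hcpos
      have hlt : erf (m' / c) < (2 / Real.sqrt Real.pi) * (m' / c) := by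
        unfold erf
        exact mul_lt_mul_of_pos_left (integral_gauss_lt hdiv) (by positivity)
      have hle : (2 / Real.sqrt Real.pi) * (m' / c) ≤ m' := by
        calc (2 / Real.sqrt Real.pi) * (m' / c) ≤ c * (m' / c) :=
              mul_le_mul_of_nonneg_right hcge hdiv.le
          _ = m' := by field_simp
      linarith [he]
    rcases lt_trichotomy m 0 with h | h | h
    · exfalso
      apply hpos (-m) (by linarith)
      rw [neg_div, erf_neg, ← hm]
    · exact h
    · exact (hpos m h hm).elim
  · -- 0 < ρ < 2/π
    intro ρ hρ0 hρ
    set c := Real.sqrt (2 * ρ) with hc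
    have hcpos : 0 < c := Real.sqrt_pos.2 (by linarith)
    have hclt : c < 2 / Real.sqrt Real.pi := by
      rw [← sqrt_four_div_pi, hc]
      apply Real.sqrt_lt_sqrt (by linarith)
      rw [lt_div_iff₀ hπ]
      rw [lt_div_iff₀ hπ] at hρ
      linarith
    constructor
    · -- ExistsUnique positive fixed point
      set h : ℝ → ℝ := fun m => erf (m / c) with hh
      have hcont : Continuous h := erf_continuous.comp (continuous_id.div_const c)
      have hL : 1 < 2 / Real.sqrt Real.pi / c := (one_lt_div hcpos).2 hclt
      have hder : HasDerivAt h (2 / Real.sqrt Real.pi / c) 0 := by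
        have hid : HasDerivAt (fun m : ℝ => m / c) (1 / c) 0 := (hasDerivAt_id 0).div_const c
        have h1 := (erf_hasDerivAt ((0:ℝ) / c)).comp 0 hid
        have h0 : (2 / Real.sqrt Real.pi) * Real.exp (-((0:ℝ)/c) ^ 2) * (1/c)
            = 2 / Real.sqrt Real.pi / c := by
          rw [zero_div]
          norm_num
          ring
        rw [← h0]
        exact h1
      have hslope := hasDerivAt_iff_tendsto_slope.mp hder
      have hev1 : ∀ᶠ x in nhdsWithin (0:ℝ) {(0:ℝ)}ᶜ, 1 < slope h 0 x :=
        hslope.eventually (lt_mem_nhds hL)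
      have hev2 : ∀ᶠ x in nhdsWithin (0:ℝ) (Set.Ioi 0), 1 < slope h 0 x :=
        hev1.filter_mono (nhdsWithin_mono 0
          (fun x hx => Set.mem_compl_singleton_iff.2 (ne_of_gt hx)))
      have hev3 : ∀ᶠ x in nhdsWithin (0:ℝ) (Set.Ioi 0), x < 3 :=
        mem_nhdsWithin_of_mem_nhds (gt_mem_nhds (by norm_num : (0:ℝ) < 3))
      have hev4 : ∀ᶠ x in nhdsWithin (0:ℝ) (Set.Ioi 0), 0 < x :=
        eventually_mem_nhdsWithin
      obtain ⟨a, ⟨hsl, ha3⟩, ha0⟩ := ((hev2.and hev3).and hev4).exists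
      have hha : a < h a := by
        have hs : slope h 0 a = h a / a := by
          rw [slope_def_field]
          simp [hh, erf_zero]
        rw [hs] at hsl
        have := (one_lt_div ha0).1 hsl
        linarith
      have hh3 : h 3 < 3 := by
        have hdiv : (0:ℝ) ≤ 3 / c := by positivity
        have hint := integral_gauss_le_two hdiv
        have hb : h 3 ≤ 2 / Real.sqrt Real.pi * 2 := by
          show erf (3 / c) ≤ _
          unfold erf
          exact mul_le_mul_of_nonneg_left hint (by positivity)
        have hπ43 : (4:ℝ)/3 < Real.sqrt Real.pi := by
          rw [show (4:ℝ)/3 = Real.sqrt ((4/3)^2) from (Real.sqrt_sq (by norm_num)).symm]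
          exact Real.sqrt_lt_sqrt (by positivity) (by nlinarith [Real.pi_gt_three])
        have h4 : 2 / Real.sqrt Real.pi * 2 = 4 / Real.sqrt Real.pi := by ring
        have h5 : 4 / Real.sqrt Real.pi < 3 := by
          rw [div_lt_iff₀ sqrt_pi_pos]
          nlinarith [sqrt_pi_pos]
        linarith [hb, h4 ▸ hb]
      have hglt : a ≤ 3 := ha3.le
      have hcontg : ContinuousOn (fun m => h m - m) (Set.Icc a 3) :=
        (hcont.sub continuous_id).continuousOn
      have h0mem : (0:ℝ) ∈ Set.Icc ((fun m => h m - m) 3) ((fun m => h m - m) a) := by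
        constructor
        · simp only
          linarith
        · simp only
          linarith
      obtain ⟨m, hmmem, hme⟩ := intermediate_value_Icc' hglt hcontg h0mem
      have hmpos : 0 < m := lt_of_lt_of_le ha0 hmmem.1
      have heq : m = erf (m / c) := by
        have : h m - m = 0 := hme
        have : h m = m := by linarith
        exact this.symm
      exact ⟨m, ⟨hmpos, heq⟩, fun y hy => fixed_unique hcpos hy.1 hmpos hy.2 heq⟩
    · intro m hm
      rw [neg_div, erf_neg, ← hm]
end
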